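/- Under the oracle baseline b* defined by b*(h,a) = u_i^σ(h·a), the baseline-enhanced sampled values are exact on the sampled trajectory: for every z ∈ Z, every nonterminal h ∈ H \ Z with h ⊏ z, and every a ∈ A(h), û_i^{b*}(σ,h,a|z) = u_i^σ(h·a); consequently also û_i^{b*}(σ,h|z) = u_i^σ(h) for every nonterminal h ⊏ z. -/

import Mathlib

open Finset

variable {A : Type*} [Fintype A] [DecidableEq A]

/-- The set of legal actions at history `h`: those `a` with `h ++ [a] ∈ H`. -/
def legal (H : Finset (List A)) (h : List A) : Finset A :=
  Finset.univ.filter fun a => h ++ [a] ∈ H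

/-- Product of `f (h', a)` over all prefix steps `h'·a ⊑ h` of the history `h`.
With `f = ξ` this is the sampling probability `q(h)`; note `pathProd f [] = 1`. -/
def pathProd (f : List A → A → ℝ) (h : List A) : ℝ :=
  ∏ k : Fin h.length, f (h.take (k : ℕ)) (h.get k)

/-- `π^σ(h, z)`: product of `σ (h', a)` over all prefix steps `h'·a` with `h ⊏ h'·a ⊑ z`. -/
def sfxProd (σ : List A → A → ℝ) (h z : List A) : ℝ :=
  ∏ k : Fin z.length, if h.length ≤ (k : ℕ) then σ (z.take (k : ℕ)) (z.get k) else 1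

/-- `π^σ_{-i}(h)`: product of `σ (h', a)` over all prefix steps `h'·a ⊑ h` with `τ h' ≠ i`. -/
def oppProd {N : Type*} [DecidableEq N] (σ : List A → A → ℝ) (τ : List A → N) (i : N)
    (h : List A) : ℝ :=
  ∏ k : Fin h.length, if τ (h.take (k : ℕ)) ≠ i then σ (h.take (k : ℕ)) (h.get k) else 1

/-- The expected value `u_i^σ(h) = Σ_{z ∈ Z, h ⊑ z} π^σ(h,z)·u_i(z)`. -/
def expUtil (σ : List A → A → ℝ) (u : List A → ℝ) (Z : Finset (List A)) (h : List A) : ℝ :=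
  ∑ z ∈ Z.filter (fun z => h <+: z), sfxProd σ h z * u z

/-- The plain sampled history value `û_i(σ, h | z)`:
`u_i(h)` if `h = z`, `Σ_{a ∈ A(h)} σ(h,a)·û_i(σ,h,a|z)` if `h ⊏ z`, and `0` otherwise,
where `û_i(σ,h,a|z) = û_i(σ,h·a|z)/ξ(h,a)` if `h·a ⊑ z` and `0` otherwise. -/
noncomputable def uhat (ξ σ : List A → A → ℝ) (u : List A → ℝ) (H : Finset (List A))
    (z : List A) (h : List A) : ℝ :=
  if h = z then u z
  else if h <+: z then
    ∑ a ∈ legal H h, σ h a *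
      (if hpa : h ++ [a] <+: z then uhat ξ σ u H z (h ++ [a]) / ξ h a else 0)
  else 0
termination_by z.length - h.length
decreasing_by
  have := hpa.length_le
  simp only [List.length_append, List.length_singleton] at this ⊢
  omega

/-- The plain sampled history-action value `û_i(σ, h, a | z)`. -/
noncomputable def uhatA (ξ σ : List A → A → ℝ) (u : List A → ℝ) (H : Finset (List A))
    (z : List A) (h : List A) (a : A) : ℝ :=
  if h ++ [a] <+: z then uhat ξ σ u H z (h ++ [a]) / ξ h a else 0

/-- The baseline-enhanced sampled history value `û_i^b(σ, h | z)`: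
`u_i(h)` if `h = z`, `Σ_{a ∈ A(h)} σ(h,a)·û_i^b(σ,h,a|z)` if `h ⊏ z`, and `0` otherwise,
where `û_i^b(σ,h,a|z) = b(h,a) + (û_i^b(σ,h·a|z) − b(h,a))/ξ(h,a)` if `h·a ⊑ z`,
`b(h,a)` if `h ⊏ z` and `h·a ⋢ z`, and `0` otherwise. -/
noncomputable def uhatB (ξ σ : List A → A → ℝ) (u : List A → ℝ) (H : Finset (List A))
    (b : List A → A → ℝ) (z : List A) (h : List A) : ℝ :=
  if h = z then u z
  else if h <+: z then
    ∑ a ∈ legal H h, σ h a *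
      (if hpa : h ++ [a] <+: z then b h a + (uhatB ξ σ u H b z (h ++ [a]) - b h a) / ξ h a
       else b h a)
  else 0
termination_by z.length - h.length
decreasing_by
  have := hpa.length_le
  simp only [List.length_append, List.length_singleton] at this ⊢
  omega

/-- The baseline-enhanced sampled history-action value `û_i^b(σ, h, a | z)`. -/
noncomputable def uhatBA (ξ σ : List A → A → ℝ) (u : List A → ℝ) (H : Finset (List A))
    (b : List A → A → ℝ) (z : List A) (h : List A) (a : A) : ℝ :=
  if h ++ [a] <+: z then b h a + (uhatB ξ σ u H b z (h ++ [a]) - b h a) / ξ h a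
  else if h <+: z ∧ h ≠ z then b h a
  else 0


section Helpers

omit [Fintype A] in
lemma next_exists {h z : List A} (hp : h <+: z) (hne : h ≠ z) : ∃ a, h ++ [a] <+: z := by
  obtain ⟨t, ht⟩ := hp
  cases t with
  | nil => simp at ht; exact absurd ht hne
  | cons a t' => exact ⟨a, t', by simp [← ht]⟩

omit [Fintype A] in
lemma next_unique {h z : List A} {a b : A} (hpa : h ++ [a] <+: z) (hpb : h ++ [b] <+: z) :
    a = b := by
  have := List.prefix_of_prefix_length_le hpa hpb (by simp)
  simpa using this.eq_of_length (by simp)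

omit [Fintype A] [DecidableEq A] in
lemma sfxProd_self (σ : List A → A → ℝ) (z : List A) : sfxProd σ z z = 1 := by
  unfold sfxProd; exact Finset.prod_eq_one fun k _ => if_neg (by omega)

omit [Fintype A] [DecidableEq A] in
lemma sfxProd_step (σ : List A → A → ℝ) (h z : List A) (a : A) (hp : h ++ [a] <+: z) :
    sfxProd σ h z = σ h a * sfxProd σ (h ++ [a]) z := by
  have hl : h.length < z.length := by
    have := hp.length_le; simp at this; omega
  have htake : z.take h.length = h := by
    obtain ⟨t, ht⟩ := hp; rw [List.append_assoc] at ht; subst ht; exact List.take_left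
  have hget : z.get ⟨h.length, hl⟩ = a := by
    obtain ⟨t, ht⟩ := hp; rw [List.append_assoc] at ht; subst ht
    simp [List.get_eq_getElem, List.getElem_append_right]
  unfold sfxProd
  have key : ∀ k : Fin z.length,
      (if h.length ≤ (k : ℕ) then σ (z.take (k : ℕ)) (z.get k) else 1)
      = (if (k : ℕ) = h.length then σ (z.take (k : ℕ)) (z.get k) else 1) *
        (if (h ++ [a]).length ≤ (k : ℕ) then σ (z.take (k : ℕ)) (z.get k) else 1) := by
    intro k
    simp only [List.length_append, List.length_singleton]
    rcases lt_trichotomy (k : ℕ) h.length with hc | hc | hc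
    · rw [if_neg (by omega), if_neg (by omega), if_neg (by omega), one_mul]
    · rw [if_pos (by omega), if_pos hc, if_neg (by omega), mul_one]
    · rw [if_pos (by omega), if_neg (by omega), if_pos (by omega), one_mul]
  rw [Finset.prod_congr rfl (fun k _ => key k), Finset.prod_mul_distrib]
  congr 1
  rw [Finset.prod_eq_single (⟨h.length, hl⟩ : Fin z.length)]
  · rw [if_pos rfl]; simp only [htake]
    simpa [List.get_eq_getElem] using congrArg (σ h) hget
  · intro k _ hk
    rw [if_neg (fun hc => hk (Fin.ext hc))]
  · simp

omit [Fintype A] in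
lemma expUtil_terminal (σ : List A → A → ℝ) (u : List A → ℝ) (H Z : Finset (List A))
    (hZH : Z ⊆ H) (hterm : ∀ z ∈ Z, ∀ h ∈ H, z <+: h → z = h)
    {z : List A} (hz : z ∈ Z) : expUtil σ u Z z = u z := by
  unfold expUtil
  have : Z.filter (fun z' => z <+: z') = {z} := by
    ext w
    simp only [Finset.mem_filter, Finset.mem_singleton]
    constructor
    · rintro ⟨hw, hp⟩
      exact (hterm z hz w (hZH hw) hp).symm
    · rintro rfl
      exact ⟨hz, List.prefix_refl _⟩
  rw [this, Finset.sum_singleton, sfxProd_self, one_mul]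

lemma expUtil_step (σ : List A → A → ℝ) (u : List A → ℝ) (H Z : Finset (List A))
    (hZH : Z ⊆ H) (hclosed : ∀ h ∈ H, ∀ h' : List A, h' <+: h → h' ∈ H)
    {h : List A} (hhz : h ∉ Z) :
    expUtil σ u Z h = ∑ a ∈ legal H h, σ h a * expUtil σ u Z (h ++ [a]) := by
  unfold expUtil
  have hS : Z.filter (fun z => h <+: z)
      = (legal H h).biUnion (fun a => Z.filter (fun z => h ++ [a] <+: z)) := by
    ext z
    simp only [Finset.mem_filter, Finset.mem_biUnion, legal, Finset.mem_univ, true_and]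
    constructor
    · rintro ⟨hzZ, hp⟩
      have hne : h ≠ z := fun he => hhz (he ▸ hzZ)
      obtain ⟨a, hpa⟩ := next_exists hp hne
      exact ⟨a, hclosed z (hZH hzZ) _ hpa, hzZ, hpa⟩
    · rintro ⟨a, _, hzZ, hpa⟩
      exact ⟨hzZ, (List.prefix_append h [a]).trans hpa⟩
  rw [hS, Finset.sum_biUnion]
  · apply Finset.sum_congr rfl
    intro a _
    rw [Finset.mul_sum]
    apply Finset.sum_congr rfl
    intro z hzm
    rw [Finset.mem_filter] at hzm
    rw [sfxProd_step σ h z a hzm.2, mul_assoc]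
  · intro a _ b _ hab
    simp only [Function.onFun, Finset.disjoint_left, Finset.mem_filter]
    rintro z ⟨_, hpa⟩ ⟨_, hpb⟩
    exact hab (next_unique hpa hpb)

end Helpers

/-- **The oracle baseline gives exact values on the sampled trajectory**
(Lemma 7 in the paper). Under the oracle baseline `b*(h,a) = u_i^σ(h·a)`, for every
`z ∈ Z` and nonterminal `h ∈ H \ Z` with `h ⊏ z`: `û_i^{b*}(σ,h,a|z) = u_i^σ(h·a)`
for every `a ∈ A(h)`, and consequently `û_i^{b*}(σ,h|z) = u_i^σ(h)`. -/
theorem oracle_baseline_exact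
    (H Z : Finset (List A))
    (hempty : ([] : List A) ∈ H)
    (hclosed : ∀ h ∈ H, ∀ h' : List A, h' <+: h → h' ∈ H)
    (hZH : Z ⊆ H)
    (hreach : ∀ h ∈ H, ∃ z ∈ Z, h <+: z)
    (hterm : ∀ z ∈ Z, ∀ h ∈ H, z <+: h → z = h)
    (hlegal : ∀ h ∈ H, h ∉ Z → (legal H h).Nonempty)
    (ξ : List A → A → ℝ)
    (hξpos : ∀ h ∈ H, h ∉ Z → ∀ a ∈ legal H h, 0 < ξ h a)
    (hξsum : ∀ h ∈ H, h ∉ Z → ∑ a ∈ legal H h, ξ h a = 1)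
    (σ : List A → A → ℝ)
    (hσnn : ∀ h ∈ H, h ∉ Z → ∀ a ∈ legal H h, 0 ≤ σ h a)
    (hσsum : ∀ h ∈ H, h ∉ Z → ∑ a ∈ legal H h, σ h a = 1)
    (u : List A → ℝ) :
    ∀ z ∈ Z, ∀ h ∈ H, h ∉ Z → h <+: z → h ≠ z →
      (∀ a ∈ legal H h,
        uhatBA ξ σ u H (fun h' a' => expUtil σ u Z (h' ++ [a'])) z h a
          = expUtil σ u Z (h ++ [a])) ∧
      uhatB ξ σ u H (fun h' a' => expUtil σ u Z (h' ++ [a'])) z h = expUtil σ u Z h := by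
  intro z hz
  suffices key : ∀ n : ℕ, ∀ h, h ∈ H → h ∉ Z → h <+: z → h ≠ z →
      z.length - h.length ≤ n →
      ((∀ a ∈ legal H h,
        uhatBA ξ σ u H (fun h' a' => expUtil σ u Z (h' ++ [a'])) z h a
          = expUtil σ u Z (h ++ [a])) ∧
      uhatB ξ σ u H (fun h' a' => expUtil σ u Z (h' ++ [a'])) z h = expUtil σ u Z h) by
    intro h hh hhz hpre hne
    exact key (z.length - h.length) h hh hhz hpre hne le_rfl
  intro n
  induction n with
  | zero =>
    intro h _ _ hpre hne hlen
    exfalso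
    have h1 := hpre.length_le
    have h2 : h.length ≠ z.length := fun he => hne (hpre.eq_of_length he)
    omega
  | succ n ih =>
    intro h hh hhz hpre hne hlen
    have partA : ∀ a ∈ legal H h,
        uhatBA ξ σ u H (fun h' a' => expUtil σ u Z (h' ++ [a'])) z h a
          = expUtil σ u Z (h ++ [a]) := by
      intro a ha
      have hHa : h ++ [a] ∈ H := by
        simpa [legal] using ha
      rw [uhatBA]
      by_cases hpa : h ++ [a] <+: z
      · rw [if_pos hpa]
        have huB : uhatB ξ σ u H (fun h' a' => expUtil σ u Z (h' ++ [a'])) z (h ++ [a])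
            = expUtil σ u Z (h ++ [a]) := by
          by_cases heq : h ++ [a] = z
          · rw [heq, uhatB, if_pos rfl, expUtil_terminal σ u H Z hZH hterm hz]
          · have hnZ : h ++ [a] ∉ Z := fun hin => heq (hterm _ hin z (hZH hz) hpa)
            have hlen' : z.length - (h ++ [a]).length ≤ n := by
              have := hpa.length_le
              simp only [List.length_append, List.length_singleton] at this ⊢
              omega
            exact (ih (h ++ [a]) hHa hnZ hpa heq hlen').2
        rw [huB]; ring
      · rw [if_neg hpa, if_pos ⟨hpre, hne⟩]
    refine ⟨partA, ?_⟩
    rw [uhatB, if_neg hne, if_pos hpre, expUtil_step σ u H Z hZH hclosed hhz]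
    apply Finset.sum_congr rfl
    intro a ha
    congr 1
    have hA := partA a ha
    rw [uhatBA] at hA
    split_ifs with hc
    · rw [if_pos hc] at hA
      exact hA
    · rfl
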